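/- For n ∈ {3, 4}, there exist four completely independent spanning trees in the Cartesian product K_7 □ C_n of the complete graph on 7 vertices and the cycle on n vertices. -/

import Mathlib

open SimpleGraph

/-- The degree of the vertex `v` in the graph `T`, as the cardinality of its
neighbor set. -/
noncomputable def degN {V : Type*} (T : SimpleGraph V) (v : V) : ℕ :=
  (T.neighborSet v).ncard

/-- `T` is a spanning tree of `G`: a subgraph of `G` (on the same vertex set)
which is a tree. -/
def IsSpanningTreeOf {V : Type*} (G T : SimpleGraph V) : Prop :=
  T ≤ G ∧ T.IsTree

/-- The set of inner (non-leaf) vertices of `T`. -/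
def inn {V : Type*} (T : SimpleGraph V) : Set V :=
  {v | 2 ≤ degN T v}

/-- `T 0, …, T (r-1)` are completely independent spanning trees of `G`:
pairwise edge-disjoint spanning trees of `G` such that every vertex has degree
greater than `1` in at most one of them. -/
def AreCISTs {V : Type*} {r : ℕ} (G : SimpleGraph V) (T : Fin r → SimpleGraph V) : Prop :=
  (∀ i, IsSpanningTreeOf G (T i)) ∧
  (∀ i j, i ≠ j → Disjoint ((T i).edgeSet) ((T j).edgeSet)) ∧
  (∀ v : V, ∀ i j, 1 < degN (T i) v → 1 < degN (T j) v → i = j)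

/-- `G` is `d`-regular: every vertex has degree `d`. -/
def IsRegularDeg {V : Type*} (G : SimpleGraph V) (d : ℕ) : Prop :=
  ∀ v, degN G v = d

/-- The set of lost edges: edges of `G` belonging to none of the trees `T i`. -/
def lostEdges {V : Type*} {r : ℕ} (G : SimpleGraph V) (T : Fin r → SimpleGraph V) :
    Set (Sym2 V) :=
  G.edgeSet \ ⋃ i, (T i).edgeSet

/-- `E^l_T`: the set of edges of `G` having both endpoints inner vertices of `T`
and which are not edges of `T`. -/
def lostAt {V : Type*} (G T : SimpleGraph V) : Set (Sym2 V) :=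
  {e | e ∈ G.edgeSet ∧ (∀ v ∈ e, v ∈ inn T) ∧ e ∉ T.edgeSet}

/-- The potential extra degree of a spanning tree `T` of a `2r`-regular graph of
order `n`: `ped(T) = |inn(T)|·r − n + 2` (as an integer). -/
noncomputable def ped {V : Type*} (n r : ℕ) (T : SimpleGraph V) : ℤ :=
  ((inn T).ncard : ℤ) * r - n + 2

set_option maxRecDepth 40000

section
variable {V : Type*} [DecidableEq V]

def pTree (f : V → V) (r : V) : SimpleGraph V where
  Adj u v := u ≠ v ∧ ((u ≠ r ∧ f u = v) ∨ (v ≠ r ∧ f v = u))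
  symm := ⟨fun u v ⟨h1, h2⟩ => ⟨h1.symm, h2.symm⟩⟩
  loopless := ⟨fun v h => h.1 rfl⟩

instance pTree.adjDec (f : V → V) (r : V) : DecidableRel (pTree f r).Adj :=
  fun u v => inferInstanceAs (Decidable (u ≠ v ∧ ((u ≠ r ∧ f u = v) ∨ (v ≠ r ∧ f v = u))))

instance boxProd.adjDec {α β : Type*} [DecidableEq α] [DecidableEq β]
    (G : SimpleGraph α) (H : SimpleGraph β) [DecidableRel G.Adj] [DecidableRel H.Adj] :
    DecidableRel (G □ H).Adj :=
  fun x y => decidable_of_iff _ (boxProd_adj (x := x) (y := y)).symm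

section
variable (f : V → V) (r : V) (rk : V → ℕ) (hr : f r = r)
  (hrk : ∀ v, v ≠ r → rk (f v) < rk v)

include hr hrk

lemma pTree.rank_iter : ∀ (k : ℕ) (v : V), rk (f^[k] v) ≤ rk v := by
  intro k
  induction k with
  | zero => intro v; simp
  | succ m ih =>
    intro v
    rw [Function.iterate_succ_apply]
    refine (ih (f v)).trans ?_
    by_cases h : v = r
    · subst h; rw [hr]
    · exact (hrk v h).le

lemma pTree.reach : ∀ (n : ℕ) (v : V), rk v ≤ n → (pTree f r).Reachable v r := by
  intro n
  induction n with
  | zero =>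
    intro v hv
    by_cases h : v = r
    · subst h; rfl
    · exact absurd (lt_of_lt_of_le (hrk v h) hv) (Nat.not_lt_zero _)
  | succ m ih =>
    intro v hv
    by_cases h : v = r
    · subst h; rfl
    · have hlt := hrk v h
      have hadj : (pTree f r).Adj v (f v) := by
        refine ⟨fun he => ?_, Or.inl ⟨h, rfl⟩⟩
        rw [← he] at hlt; exact lt_irrefl _ hlt
      exact hadj.reachable.trans (ih (f v) (by omega))

lemma pTree.connected : (pTree f r).Connected := by
  rw [connected_iff]
  refine ⟨fun u v => ?_, ⟨r⟩⟩
  exact (pTree.reach f r rk hr hrk (rk u) u le_rfl).trans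
    (pTree.reach f r rk hr hrk (rk v) v le_rfl).symm

lemma pTree.isBridge_parent (v : V) (hv : v ≠ r) :
    (pTree f r).IsBridge s(v, f v) := by
  have hadj : (pTree f r).Adj v (f v) := by
    refine ⟨fun he => ?_, Or.inl ⟨hv, rfl⟩⟩
    have := hrk v hv; rw [← he] at this; exact lt_irrefl _ this
  rw [isBridge_iff]
  refine fun hreach => ?_
  obtain ⟨p⟩ := hreach
  set S : Set V := {u | ∃ k, f^[k] u = v} with hS
  have hvS : v ∈ S := ⟨0, rfl⟩
  have hfvS : f v ∉ S := by
    rintro ⟨k, hk⟩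
    have h1 : rk (f^[k] (f v)) ≤ rk (f v) := pTree.rank_iter f r rk hr hrk k (f v)
    rw [hk] at h1
    exact absurd (lt_of_le_of_lt h1 (hrk v hv)) (lt_irrefl _)
  obtain ⟨d, _, hdS, hdnS⟩ := p.exists_boundary_dart S hvS hfvS
  have hadj' := d.adj
  rw [deleteEdges_adj] at hadj'
  obtain ⟨hT, hnot⟩ := hadj'
  have hne : s(d.fst, d.snd) ≠ s(v, f v) := by
    intro he
    exact hnot (by rw [he]; rfl)
  obtain ⟨k, hk⟩ := hdS
  rcases hT.2 with ⟨h1, h2⟩ | ⟨h1, h2⟩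
  · -- f d.fst = d.snd
    by_cases hdv : d.fst = v
    · exact hne (by rw [hdv, ← h2, hdv])
    · apply hdnS
      rcases k with _ | m
      · exact absurd hk hdv
      · exact ⟨m, by rw [← h2, ← Function.iterate_succ_apply]; exact hk⟩
  · -- f d.snd = d.fst
    exact hdnS ⟨k + 1, by rw [Function.iterate_succ_apply, h2]; exact hk⟩

lemma pTree.isAcyclic : (pTree f r).IsAcyclic := by
  rw [isAcyclic_iff_forall_adj_isBridge]
  intro u w hadj
  rcases hadj.2 with ⟨h1, h2⟩ | ⟨h1, h2⟩
  · rw [← h2]; exact pTree.isBridge_parent f r rk hr hrk u h1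
  · rw [← h2, Sym2.eq_swap]; exact pTree.isBridge_parent f r rk hr hrk w h1

lemma pTree.isTree : (pTree f r).IsTree :=
  ⟨pTree.connected f r rk hr hrk, pTree.isAcyclic f r rk hr hrk⟩

end

lemma degN_eq_degree [Fintype V] (T : SimpleGraph V) [DecidableRel T.Adj] (v : V) :
    degN T v = T.degree v := by
  rw [degN, Set.ncard_eq_toFinset_card']
  rfl

lemma disjoint_edgeSet_of {A B : SimpleGraph V} (h : ∀ u v, A.Adj u v → ¬ B.Adj u v) :
    Disjoint A.edgeSet B.edgeSet := by
  rw [Set.disjoint_left]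
  intro e
  induction e using Sym2.ind with
  | _ x y => exact fun ha hb => h x y ha hb

end

lemma le_of_forall_adj {V : Type*} {A B : SimpleGraph V}
    (h : ∀ u v, A.Adj u v → B.Adj u v) : A ≤ B :=
  fun {u v} huv => h u v huv

def ftbl3 : Fin 4 → List (Fin 7 × Fin 3) := ![
  [(0, 2), (0, 2), (5, 2), (5, 0), (3, 1), (5, 2), (6, 0), (3, 1), (5, 2), (3, 1), (5, 1), (0, 2), (5, 0), (5, 1), (0, 2), (6, 0), (5, 2), (5, 0), (6, 0), (6, 0), (6, 0)],
  [(1, 0), (1, 1), (2, 2), (3, 0), (1, 0), (3, 2), (1, 0), (2, 2), (3, 2), (3, 0), (3, 2), (3, 0), (3, 0), (1, 1), (2, 2), (3, 0), (1, 1), (3, 2), (1, 0), (1, 1), (2, 2)],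
  [(4, 0), (2, 1), (6, 2), (4, 0), (2, 1), (6, 2), (4, 0), (2, 0), (2, 0), (2, 0), (6, 1), (6, 2), (4, 0), (6, 1), (4, 0), (2, 0), (2, 1), (6, 2), (4, 0), (2, 1), (6, 1)],
  [(0, 1), (0, 1), (1, 2), (1, 2), (1, 2), (4, 2), (0, 0), (4, 1), (1, 2), (0, 0), (4, 1), (4, 2), (4, 1), (0, 1), (4, 1), (0, 0), (0, 1), (4, 2), (0, 0), (0, 1), (4, 2)]
]
def rtbl3 : Fin 4 → List ℕ := ![
  [4, 4, 3, 2, 5, 3, 1, 5, 3, 5, 4, 4, 2, 4, 4, 1, 3, 2, 0, 1, 1],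
  [2, 3, 3, 1, 2, 2, 2, 3, 2, 0, 2, 1, 1, 3, 3, 1, 3, 2, 2, 3, 3],
  [1, 3, 5, 1, 3, 5, 1, 2, 2, 2, 4, 5, 0, 4, 1, 2, 3, 5, 1, 3, 4],
  [1, 0, 4, 4, 4, 3, 2, 2, 4, 2, 2, 3, 2, 1, 2, 2, 1, 3, 2, 1, 3]
]
def rt3 : Fin 4 → Fin 7 × Fin 3 := ![(6, 0), (3, 0), (4, 0), (0, 1)]
def pf3 (i : Fin 4) : Fin 7 × Fin 3 → Fin 7 × Fin 3 :=
  fun v => (ftbl3 i).getD (v.1.val * 3 + v.2.val) v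
def prk3 (i : Fin 4) : Fin 7 × Fin 3 → ℕ :=
  fun v => (rtbl3 i).getD (v.1.val * 3 + v.2.val) 0
abbrev T3 (i : Fin 4) : SimpleGraph (Fin 7 × Fin 3) := pTree (pf3 i) (rt3 i)

lemma cists3 : AreCISTs ((⊤ : SimpleGraph (Fin 7)) □ cycleGraph 3) T3 := by
  refine ⟨fun i => ⟨?_, ?_⟩, fun i j hij => ?_, fun v i j h1 h2 => ?_⟩
  · exact le_of_forall_adj (by fin_cases i <;> decide)
  · exact pTree.isTree (pf3 i) (rt3 i) (prk3 i)
      (by fin_cases i <;> decide) (by fin_cases i <;> decide)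
  · refine disjoint_edgeSet_of ?_
    fin_cases i <;> fin_cases j <;> first
      | exact absurd rfl hij
      | decide
  · rw [degN_eq_degree] at h1 h2
    revert h1 h2
    revert v
    fin_cases i <;> fin_cases j <;> first
      | exact fun _ _ _ => rfl
      | decide

def ftbl4 : Fin 4 → List (Fin 7 × Fin 4) := ![
  [(0, 0), (1, 1), (0, 3), (0, 0), (0, 0), (5, 1), (1, 1), (2, 3), (2, 3), (5, 1), (0, 2), (0, 3), (0, 0), (5, 1), (5, 2), (0, 3), (0, 0), (1, 1), (0, 2), (2, 3), (5, 1), (5, 2), (0, 2), (2, 3), (0, 0), (1, 1), (0, 2), (0, 3)],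
  [(2, 0), (4, 1), (1, 2), (1, 3), (1, 0), (1, 0), (1, 3), (1, 0), (1, 0), (2, 0), (4, 2), (3, 3), (1, 0), (4, 1), (1, 2), (1, 3), (2, 0), (4, 2), (1, 2), (1, 3), (1, 0), (4, 1), (4, 2), (3, 3), (2, 0), (4, 1), (4, 2), (3, 3)],
  [(0, 1), (0, 1), (0, 1), (4, 3), (4, 0), (3, 1), (6, 2), (6, 3), (3, 0), (3, 1), (6, 2), (6, 3), (3, 1), (0, 1), (3, 1), (3, 0), (3, 0), (4, 0), (4, 3), (4, 0), (4, 0), (0, 1), (6, 2), (6, 3), (3, 0), (6, 2), (6, 3), (4, 3)],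
  [(5, 0), (2, 1), (3, 2), (5, 3), (6, 0), (2, 1), (2, 2), (5, 3), (5, 0), (2, 1), (2, 1), (2, 2), (5, 0), (6, 1), (2, 2), (3, 2), (6, 0), (2, 1), (3, 2), (5, 3), (6, 0), (6, 1), (2, 2), (5, 0), (6, 1), (2, 1), (3, 2), (6, 0)]
]
def rtbl4 : Fin 4 → List ℕ := ![
  [0, 6, 2, 1, 1, 5, 6, 3, 3, 5, 3, 2, 1, 5, 4, 2, 1, 6, 3, 3, 5, 4, 3, 3, 1, 6, 3, 2],
  [2, 5, 3, 2, 0, 1, 2, 1, 1, 2, 4, 3, 1, 5, 3, 2, 2, 4, 3, 2, 1, 5, 4, 3, 2, 5, 4, 3],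
  [1, 0, 1, 5, 4, 2, 7, 6, 3, 2, 7, 6, 2, 1, 2, 3, 3, 4, 5, 4, 4, 1, 7, 6, 3, 7, 6, 5],
  [4, 1, 3, 5, 3, 1, 2, 5, 4, 0, 1, 2, 4, 2, 2, 3, 3, 1, 3, 5, 3, 2, 2, 4, 2, 1, 3, 3]
]
def rt4 : Fin 4 → Fin 7 × Fin 4 := ![(0, 0), (1, 0), (0, 1), (2, 1)]
def pf4 (i : Fin 4) : Fin 7 × Fin 4 → Fin 7 × Fin 4 :=
  fun v => (ftbl4 i).getD (v.1.val * 4 + v.2.val) v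
def prk4 (i : Fin 4) : Fin 7 × Fin 4 → ℕ :=
  fun v => (rtbl4 i).getD (v.1.val * 4 + v.2.val) 0
abbrev T4 (i : Fin 4) : SimpleGraph (Fin 7 × Fin 4) := pTree (pf4 i) (rt4 i)

lemma cists4 : AreCISTs ((⊤ : SimpleGraph (Fin 7)) □ cycleGraph 4) T4 := by
  refine ⟨fun i => ⟨?_, ?_⟩, fun i j hij => ?_, fun v i j h1 h2 => ?_⟩
  · exact le_of_forall_adj (by fin_cases i <;> decide)
  · exact pTree.isTree (pf4 i) (rt4 i) (prk4 i)
      (by fin_cases i <;> decide) (by fin_cases i <;> decide)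
  · refine disjoint_edgeSet_of ?_
    fin_cases i <;> fin_cases j <;> first
      | exact absurd rfl hij
      | decide
  · rw [degN_eq_degree] at h1 h2
    revert h1 h2
    revert v
    fin_cases i <;> fin_cases j <;> first
      | exact fun _ _ _ => rfl
      | decide


/-- For `n ∈ {3, 4}`, there exist four completely independent spanning trees in
`K_7 □ C_n`. -/
theorem stmt_16 (n : ℕ) (hn : n = 3 ∨ n = 4) :
    ∃ T : Fin 4 → SimpleGraph (Fin 7 × Fin n),
      AreCISTs ((⊤ : SimpleGraph (Fin 7)) □ cycleGraph n) T := by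
  rcases hn with rfl | rfl
  · exact ⟨T3, cists3⟩
  · exact ⟨T4, cists4⟩
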